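/- Let Σ be a 2-chromatic signed simple graph (χ(Σ) = 2). Then M(Σ) = 1 and m(Σ) = 0 if and only if Σ is disconnected and every edge of Σ is negative. -/

import Mathlib

/-- A signed simple graph: two edge-disjoint simple graphs on the same vertex set,
the positive edges and the negative edges. -/
structure SignedGraph (V : Type*) where
  pos : SimpleGraph V
  neg : SimpleGraph V
  disjoint : ∀ a b : V, ¬ (pos.Adj a b ∧ neg.Adj a b)

/-- The color set of size `n`: `{±1, …, ±k}` if `n = 2k`, and `{0, ±1, …, ±k}` if `n = 2k+1`. -/
noncomputable def signedColorSet (n : ℕ) : Finset ℤ :=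
  if Even n then (Finset.Icc (-((n / 2 : ℕ) : ℤ)) ((n / 2 : ℕ) : ℤ)).erase 0
  else Finset.Icc (-((n / 2 : ℕ) : ℤ)) ((n / 2 : ℕ) : ℤ)

/-- A proper coloration of a signed graph using the color set of size `n`. -/
def IsProperColoration {V : Type*} (S : SignedGraph V) (n : ℕ) (κ : V → ℤ) : Prop :=
  (∀ v, κ v ∈ signedColorSet n) ∧
  (∀ a b, S.pos.Adj a b → κ a ≠ κ b) ∧
  (∀ a b, S.neg.Adj a b → κ a ≠ -κ b)

/-- The chromatic number: the least size of a color set admitting a proper coloration. -/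
noncomputable def sChromaticNumber {V : Type*} (S : SignedGraph V) : ℕ :=
  sInf {n : ℕ | ∃ κ : V → ℤ, IsProperColoration S n κ}

/-- A minimal coloration: a proper coloration using the color set of size `χ(Σ)`. -/
def IsMinimalColoration {V : Type*} (S : SignedGraph V) (κ : V → ℤ) : Prop :=
  IsProperColoration S (sChromaticNumber S) κ

/-- The deficiency of a coloration: the number of unused colors from the color set of size `n`. -/
noncomputable def sDeficiency {V : Type*} [Fintype V] (n : ℕ) (κ : V → ℤ) : ℕ :=
  (signedColorSet n \ Finset.image κ Finset.univ).card

/-- Maximum deficiency over minimal colorations. -/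
noncomputable def maxDef {V : Type*} [Fintype V] (S : SignedGraph V) : ℕ :=
  sSup {d : ℕ | ∃ κ : V → ℤ, IsMinimalColoration S κ ∧ sDeficiency (sChromaticNumber S) κ = d}

/-- Minimum deficiency over minimal colorations. -/
noncomputable def minDef {V : Type*} [Fintype V] (S : SignedGraph V) : ℕ :=
  sInf {d : ℕ | ∃ κ : V → ℤ, IsMinimalColoration S κ ∧ sDeficiency (sChromaticNumber S) κ = d}

/-- A stable cover of the positive edges: a vertex cover of `E⁺` that is stable in `Σ`. -/
def IsStableCover {V : Type*} (S : SignedGraph V) (T : Set V) : Prop :=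
  (∀ a b, S.pos.Adj a b → a ∈ T ∨ b ∈ T) ∧
  (∀ a ∈ T, ∀ b ∈ T, ¬ S.pos.Adj a b ∧ ¬ S.neg.Adj a b)

/-- An edge `ab` has exactly one endpoint in `A`. -/
def crossing {V : Type*} (A : Set V) (a b : V) : Prop := ¬ ((a ∈ A) ↔ (b ∈ A))

/-- Switching a signed graph at a vertex set `A`: the sign of every edge with exactly one
endpoint in `A` is negated. -/
def SignedGraph.switch {V : Type*} (S : SignedGraph V) (A : Set V) : SignedGraph V where
  pos :=
    { Adj := fun a b => (S.pos.Adj a b ∧ ¬ crossing A a b) ∨ (S.neg.Adj a b ∧ crossing A a b)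
      symm := by
        constructor
        intro a b h
        unfold crossing at *
        rcases h with ⟨h1, h2⟩ | ⟨h1, h2⟩
        · exact Or.inl ⟨h1.symm, by tauto⟩
        · exact Or.inr ⟨h1.symm, by tauto⟩
      loopless := by
        constructor
        intro a h
        rcases h with ⟨h1, _⟩ | ⟨_, h2⟩
        · exact S.pos.irrefl h1
        · exact h2 Iff.rfl }
  neg :=
    { Adj := fun a b => (S.neg.Adj a b ∧ ¬ crossing A a b) ∨ (S.pos.Adj a b ∧ crossing A a b)
      symm := by
        constructor
        intro a b h
        unfold crossing at *
        rcases h with ⟨h1, h2⟩ | ⟨h1, h2⟩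
        · exact Or.inl ⟨h1.symm, by tauto⟩
        · exact Or.inr ⟨h1.symm, by tauto⟩
      loopless := by
        constructor
        intro a h
        rcases h with ⟨h1, _⟩ | ⟨_, h2⟩
        · exact S.neg.irrefl h1
        · exact h2 Iff.rfl }
  disjoint := by
    intro a b h
    have := S.disjoint a b
    tauto

/-- General proper coloration with an arbitrary color set `C ⊆ ℤ`. -/
def IsProperWith {V : Type*} (S : SignedGraph V) (C : Set ℤ) (κ : V → ℤ) : Prop :=
  (∀ v, κ v ∈ C) ∧
  (∀ a b, S.pos.Adj a b → κ a ≠ κ b) ∧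
  (∀ a b, S.neg.Adj a b → κ a ≠ -κ b)

open Classical in
/-- The coloration switching equivalent to `κ` via `A`: negate the colors on `A`. -/
noncomputable def switchColor {V : Type*} (A : Set V) (κ : V → ℤ) : V → ℤ :=
  fun v => if v ∈ A then -κ v else κ v

/-- The adjacency of the forcing graph `F(Σ)` for the matching `m`:
a directed edge from `x` to `y` whenever `x ȳ` is a negative edge. -/
def ForcingAdj {V : Type*} (S : SignedGraph V) (m : V → V) (x y : V) : Prop :=
  S.neg.Adj x (m y)


lemma mem_scs2 (x : ℤ) : x ∈ signedColorSet 2 ↔ x = -1 ∨ x = 1 := by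
  have h2 : Even 2 := by decide
  simp only [signedColorSet, if_pos h2, Finset.mem_erase, Finset.mem_Icc]
  norm_num
  omega

lemma scs2_eq : signedColorSet 2 = ({-1, 1} : Finset ℤ) := by
  ext x
  rw [mem_scs2]
  simp

lemma card_scs2 : (signedColorSet 2).card = 2 := by rw [scs2_eq]; decide

lemma def_le_one {V : Type*} [Fintype V] (hV : Nonempty V) {S : SignedGraph V} {κ : V → ℤ}
    (hκ : IsProperColoration S 2 κ) : sDeficiency 2 κ ≤ 1 := by
  obtain ⟨v⟩ := hV
  have hv : κ v ∈ signedColorSet 2 := hκ.1 v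
  have hsub : signedColorSet 2 \ Finset.image κ Finset.univ ⊆ (signedColorSet 2).erase (κ v) := by
    intro x hx
    rw [Finset.mem_sdiff] at hx
    rw [Finset.mem_erase]
    refine ⟨?_, hx.1⟩
    rintro rfl
    exact hx.2 (Finset.mem_image_of_mem κ (Finset.mem_univ v))
  calc sDeficiency 2 κ ≤ ((signedColorSet 2).erase (κ v)).card := Finset.card_le_card hsub
    _ = 1 := by rw [Finset.card_erase_of_mem hv, card_scs2]

lemma neg_forces {V : Type*} {S : SignedGraph V} {κ : V → ℤ}
    (hκ : IsProperColoration S 2 κ) {a b : V} (hab : S.neg.Adj a b) : κ a = κ b := by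
  have ha := (mem_scs2 _).1 (hκ.1 a)
  have hb := (mem_scs2 _).1 (hκ.1 b)
  have := hκ.2.2 a b hab
  omega

/-- For a 2-chromatic signed simple graph,
`M(Σ) = 1` and `m(Σ) = 0` iff `Σ` is disconnected and all edges are negative. -/
theorem two_chromatic_def_mixed {V : Type*} [Fintype V] (S : SignedGraph V)
    (h : sChromaticNumber S = 2) :
    (maxDef S = 1 ∧ minDef S = 0) ↔ (¬ (S.pos ⊔ S.neg).Connected ∧ S.pos = ⊥) := by
  classical
  have hχ : sInf {n : ℕ | ∃ κ : V → ℤ, IsProperColoration S n κ} = 2 := h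
  have hneS : {n : ℕ | ∃ κ : V → ℤ, IsProperColoration S n κ}.Nonempty := by
    by_contra hc
    rw [Set.not_nonempty_iff_eq_empty] at hc
    rw [hc, Nat.sInf_empty] at hχ
    exact absurd hχ (by norm_num)
  obtain ⟨κ₀, hκ₀⟩ : ∃ κ : V → ℤ, IsProperColoration S 2 κ := by
    have := Nat.sInf_mem hneS
    rwa [hχ] at this
  have hV : Nonempty V := by
    by_contra hc
    haveI : IsEmpty V := not_nonempty_iff.mp hc
    have h0 : 0 ∈ {n : ℕ | ∃ κ : V → ℤ, IsProperColoration S n κ} :=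
      ⟨fun _ => 0, fun v => isEmptyElim v, fun a _ _ => isEmptyElim a, fun a _ _ => isEmptyElim a⟩
    have := Nat.sInf_le h0
    omega
  have hmin_iff : ∀ κ : V → ℤ, IsMinimalColoration S κ ↔ IsProperColoration S 2 κ := by
    intro κ; unfold IsMinimalColoration; rw [h]
  have hdefeq : ∀ κ : V → ℤ, sDeficiency (sChromaticNumber S) κ = sDeficiency 2 κ := by
    intro κ; rw [h]
  set D : Set ℕ :=
    {d : ℕ | ∃ κ : V → ℤ, IsMinimalColoration S κ ∧ sDeficiency (sChromaticNumber S) κ = d}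
    with hD
  have hMax : maxDef S = sSup D := rfl
  have hMin : minDef S = sInf D := rfl
  have hDne : D.Nonempty :=
    ⟨sDeficiency (sChromaticNumber S) κ₀, κ₀, (hmin_iff κ₀).2 hκ₀, rfl⟩
  have hDle : ∀ d ∈ D, d ≤ 1 := by
    rintro d ⟨κ, h1, rfl⟩
    rw [hdefeq κ]
    exact def_le_one hV ((hmin_iff κ).1 h1)
  constructor
  · rintro ⟨hM, hm⟩
    have hbdd : BddAbove D := ⟨1, hDle⟩
    have h1D : 1 ∈ D := by
      have := Nat.sSup_mem hDne hbdd
      rwa [← hMax, hM] at this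
    obtain ⟨κ1, hκ1, hd1⟩ := h1D
    rw [hmin_iff] at hκ1
    rw [hdefeq] at hd1
    obtain ⟨v₀⟩ := hV
    have hconst : ∀ w, κ1 w = κ1 v₀ := by
      intro w
      by_contra hne
      have ha := (mem_scs2 _).1 (hκ1.1 w)
      have hb := (mem_scs2 _).1 (hκ1.1 v₀)
      have hempty : signedColorSet 2 \ Finset.image κ1 Finset.univ = ∅ := by
        rw [Finset.eq_empty_iff_forall_notMem]
        intro x hx
        rw [Finset.mem_sdiff] at hx
        have hx1 := (mem_scs2 _).1 hx.1
        apply hx.2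
        have hcase : x = κ1 w ∨ x = κ1 v₀ := by omega
        rcases hcase with rfl | rfl
        · exact Finset.mem_image_of_mem _ (Finset.mem_univ w)
        · exact Finset.mem_image_of_mem _ (Finset.mem_univ v₀)
      unfold sDeficiency at hd1
      rw [hempty] at hd1
      simp at hd1
    have hpos : S.pos = ⊥ := by
      ext a b
      simp only [SimpleGraph.bot_adj, iff_false]
      intro hadj
      exact hκ1.2.1 a b hadj (by rw [hconst a, hconst b])
    refine ⟨?_, hpos⟩
    have h0D : 0 ∈ D := by
      rcases Nat.sInf_eq_zero.mp (by rw [← hMin]; exact hm) with h0 | h0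
      · exact h0
      · rw [h0] at hDne; exact absurd hDne (by simp)
    obtain ⟨κ2, hκ2, hd2⟩ := h0D
    rw [hmin_iff] at hκ2
    rw [hdefeq] at hd2
    have hfull : signedColorSet 2 ⊆ Finset.image κ2 Finset.univ := by
      rw [← Finset.sdiff_eq_empty_iff_subset]
      exact Finset.card_eq_zero.mp hd2
    obtain ⟨u, -, hu⟩ := Finset.mem_image.mp (hfull ((mem_scs2 1).2 (Or.inr rfl)))
    obtain ⟨w, -, hw⟩ := Finset.mem_image.mp (hfull ((mem_scs2 (-1)).2 (Or.inl rfl)))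
    intro hcon
    have hkey : ∀ a b : V, (S.pos ⊔ S.neg).Reachable a b → κ2 a = κ2 b := by
      intro a b hr
      obtain ⟨p⟩ := hr
      induction p with
      | nil => rfl
      | cons hadj _ ih =>
        refine Eq.trans ?_ ih
        rw [SimpleGraph.sup_adj] at hadj
        rcases hadj with hp | hn
        · rw [hpos] at hp; exact absurd hp (by simp)
        · exact neg_forces hκ2 hn
    have hcontr := hkey u w (hcon.preconnected u w)
    rw [hu, hw] at hcontr
    norm_num at hcontr
  · rintro ⟨hdis, hpos⟩
    have hprop1 : IsProperColoration S 2 (fun _ : V => (1 : ℤ)) := by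
      refine ⟨fun v => (mem_scs2 1).2 (Or.inr rfl), ?_, ?_⟩
      · intro a b hadj; rw [hpos] at hadj; simp at hadj
      · intro a b _; norm_num
    have hdef1 : sDeficiency 2 (fun _ : V => (1 : ℤ)) = 1 := by
      have himg : Finset.image (fun _ : V => (1 : ℤ)) Finset.univ = {1} :=
        Finset.image_const (Finset.univ_nonempty (α := V)) 1
      unfold sDeficiency
      rw [himg, scs2_eq]
      decide
    have h1D : 1 ∈ D := ⟨_, (hmin_iff _).2 hprop1, by rw [hdefeq]; exact hdef1⟩
    have hG : ¬ (S.pos ⊔ S.neg).Preconnected := fun hp => hdis ⟨hp⟩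
    rw [SimpleGraph.Preconnected] at hG
    push_neg at hG
    obtain ⟨u, v, huv⟩ := hG
    set κ2 : V → ℤ := fun x => if (S.pos ⊔ S.neg).Reachable u x then 1 else -1 with hκ2def
    have hprop2 : IsProperColoration S 2 κ2 := by
      refine ⟨?_, ?_, ?_⟩
      · intro x
        rw [mem_scs2]
        by_cases hx : (S.pos ⊔ S.neg).Reachable u x <;> simp [κ2, hx]
      · intro a b hadj; rw [hpos] at hadj; simp at hadj
      · intro a b hadj
        have hadj' : (S.pos ⊔ S.neg).Adj a b := (SimpleGraph.sup_adj S.pos S.neg a b).mpr (Or.inr hadj)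
        have hiff : (S.pos ⊔ S.neg).Reachable u a ↔ (S.pos ⊔ S.neg).Reachable u b :=
          ⟨fun hr => hr.trans hadj'.reachable, fun hr => hr.trans hadj'.symm.reachable⟩
        by_cases hx : (S.pos ⊔ S.neg).Reachable u a
        · simp [κ2, hx, hiff.1 hx]
        · have hb : ¬ (S.pos ⊔ S.neg).Reachable u b := fun hb => hx (hiff.2 hb)
          simp [κ2, hx, hb]
    have hdef2 : sDeficiency 2 κ2 = 0 := by
      unfold sDeficiency
      rw [Finset.card_eq_zero, Finset.sdiff_eq_empty_iff_subset]
      intro x hx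
      rcases (mem_scs2 x).1 hx with rfl | rfl
      · exact Finset.mem_image.2 ⟨v, Finset.mem_univ v, by simp [κ2, huv]⟩
      · exact Finset.mem_image.2 ⟨u, Finset.mem_univ u, by simp [κ2, SimpleGraph.Reachable.refl u]⟩
    have h0D : 0 ∈ D := ⟨κ2, (hmin_iff _).2 hprop2, by rw [hdefeq]; exact hdef2⟩
    refine ⟨?_, ?_⟩
    · rw [hMax]
      exact le_antisymm (csSup_le hDne hDle) (le_csSup ⟨1, hDle⟩ h1D)
    · rw [hMin]
      exact Nat.sInf_eq_zero.2 (Or.inl h0D)
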